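/- Let T be a representation of a Lie algebra L on a finite-dimensional space E with ordered basis such that all T(l) are strictly lower triangular, and let x ∈ E, l ∈ L be such that (exp(T(tl))x)_j = x_j for all j < k and all t ∈ f, and (exp(T(l))x)_k = x_k + c with c ≠ 0. Then (exp(T(tl))x)_k = x_k + ct for all t ∈ f; in particular, taking t = -x_k/c makes the k-th coordinate zero. -/

import Mathlib

attribute [local instance 100] LieRing.ofAssociativeRing

/-- Lemma 2 of the paper: if `exp(T(tl))x` fixes all coordinates below `k` for every `t`,
and `(exp(T(l))x)_k = x_k + c` with `c ≠ 0`, then `(exp(T(tl))x)_k = x_k + c t` for all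
`t`; in particular at `t = -x_k/c` the `k`-th coordinate vanishes. -/
theorem stmt8 (f : Type*) [Field f] [CharZero f] (L E : Type*) [LieRing L] [LieAlgebra f L]
    [AddCommGroup E] [Module f E] (n : ℕ) (B : Module.Basis (Fin n) f E)
    (T : L →ₗ⁅f⁆ Module.End f E)
    (hT : ∀ l : L, ∀ i j : Fin n, j ≤ i → B.repr (T l (B i)) j = 0)
    (l : L) (k : Fin n) (x : E) (c : f) (hc : c ≠ 0)
    (h1 : ∀ t : f, ∀ j < k,
      B.repr ((∑ m ∈ Finset.range n, ((m.factorial : f)⁻¹) • (T (t • l)) ^ m) x) j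
        = B.repr x j)
    (h2 : B.repr ((∑ m ∈ Finset.range n, ((m.factorial : f)⁻¹) • (T l) ^ m) x) k
        = B.repr x k + c) :
    (∀ t : f,
      B.repr ((∑ m ∈ Finset.range n, ((m.factorial : f)⁻¹) • (T (t • l)) ^ m) x) k
        = B.repr x k + c * t) ∧
    B.repr ((∑ m ∈ Finset.range n,
        ((m.factorial : f)⁻¹) • (T ((-(B.repr x k / c)) • l)) ^ m) x) k = 0 := by
  classical
  set a : ℕ → Fin n → f := fun m j => B.repr (((T l) ^ m) x) j with ha
  have ha0 : ∀ j, a 0 j = B.repr x j := by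
    intro j; simp [ha]
  -- Step A: coordinates of the exponential as a polynomial in t
  have hA : ∀ (t : f) (j : Fin n),
      B.repr ((∑ m ∈ Finset.range n, ((m.factorial : f)⁻¹) • (T (t • l)) ^ m) x) j
        = ∑ m ∈ Finset.range n, t ^ m * ((m.factorial : f)⁻¹ * a m j) := by
    intro t j
    have hs : T (t • l) = t • T l := T.map_smul t l
    rw [hs, LinearMap.sum_apply, map_sum, Finsupp.finset_sum_apply]
    refine Finset.sum_congr rfl fun m hm => ?_
    rw [smul_pow, LinearMap.smul_apply, LinearMap.smul_apply, map_smul, map_smul,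
      Finsupp.smul_apply, Finsupp.smul_apply, smul_eq_mul, smul_eq_mul]
    ring
  -- Step B: coordinates below k of (T l)^m x vanish for m ≥ 1
  have hB : ∀ j : Fin n, j < k → ∀ m, 1 ≤ m → m < n → a m j = 0 := by
    intro j hj m hm1 hmn
    set p : Polynomial f :=
      (∑ i ∈ Finset.range n,
          Polynomial.C ((i.factorial : f)⁻¹ * a i j) * Polynomial.X ^ i)
        - Polynomial.C (B.repr x j) with hp
    have hev : ∀ t : f, p.eval t = 0 := by
      intro t
      have h := h1 t j hj
      rw [hA t j] at h
      simp only [hp, Polynomial.eval_sub, Polynomial.eval_finset_sum, Polynomial.eval_mul,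
        Polynomial.eval_C, Polynomial.eval_pow, Polynomial.eval_X]
      rw [sub_eq_zero, ← h]
      exact Finset.sum_congr rfl fun i _ => by ring
    have hp0 : p = 0 := Polynomial.zero_of_eval_zero p hev
    have hcoeff : p.coeff m = (m.factorial : f)⁻¹ * a m j := by
      simp only [hp, Polynomial.coeff_sub, Polynomial.finset_sum_coeff,
        Polynomial.coeff_C_mul, Polynomial.coeff_X_pow, Polynomial.coeff_C,
        mul_ite, mul_one, mul_zero]
      rw [Finset.sum_ite_eq (Finset.range n) m, if_pos (Finset.mem_range.mpr hmn),
        if_neg (by omega), sub_zero]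
    rw [hp0, Polynomial.coeff_zero] at hcoeff
    have hfac : ((m.factorial : f))⁻¹ ≠ 0 :=
      inv_ne_zero (Nat.cast_ne_zero.mpr m.factorial_ne_zero)
    exact (mul_eq_zero.mp hcoeff.symm).resolve_left hfac
  -- Step C: the k-th coordinate of (T l)^m x vanishes for m ≥ 2
  have hC : ∀ m, 2 ≤ m → m < n → a m k = 0 := by
    intro m hm2 hmn
    obtain ⟨m', rfl⟩ : ∃ m', m = m' + 1 := ⟨m - 1, by omega⟩
    have hv : ((T l) ^ m') x = ∑ j, a m' j • B j := (B.sum_repr _).symm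
    show B.repr (((T l) ^ (m' + 1)) x) k = 0
    rw [pow_succ', Module.End.mul_apply, hv, map_sum, map_sum, Finsupp.finset_sum_apply]
    refine Finset.sum_eq_zero fun j _ => ?_
    rw [map_smul, map_smul, Finsupp.smul_apply, smul_eq_mul]
    rcases lt_or_ge j k with hjk | hjk
    · rw [hB j hjk m' (by omega) (by omega)]; ring
    · rw [hT l j k hjk]; ring
  have hn : 0 < n := k.pos
  set D : f := ∑ m ∈ Finset.range n, (if m = 1 then (m.factorial : f)⁻¹ * a m k else 0)
    with hDdef
  have hsum : ∀ t : f, ∑ m ∈ Finset.range n, t ^ m * ((m.factorial : f)⁻¹ * a m k)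
      = B.repr x k + t * D := by
    intro t
    have hcg : ∀ m ∈ Finset.range n, t ^ m * ((m.factorial : f)⁻¹ * a m k)
        = (if m = 0 then B.repr x k else 0)
          + t * (if m = 1 then (m.factorial : f)⁻¹ * a m k else 0) := by
      intro m hm
      match m with
      | 0 => simp [ha0]
      | 1 => simp
      | (m + 2) =>
        rw [hC (m + 2) (by omega) (Finset.mem_range.mp hm)]
        simp
    rw [Finset.sum_congr rfl hcg, Finset.sum_add_distrib, ← Finset.mul_sum, ← hDdef]
    congr 1
    rw [Finset.sum_ite_eq' (Finset.range n) 0 (fun _ => B.repr x k),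
      if_pos (Finset.mem_range.mpr hn)]
  have hg1 : ∑ m ∈ Finset.range n, (1 : f) ^ m * ((m.factorial : f)⁻¹ * a m k)
      = B.repr x k + c := by
    have h := hA 1 k
    rw [one_smul] at h
    rw [← h, h2]
  have hD : D = c := by
    have h := hsum 1
    rw [hg1, one_mul] at h
    exact (add_left_cancel h).symm
  constructor
  · intro t
    rw [hA t k, hsum t, hD]; ring
  · rw [hA _ k, hsum, hD]
    field_simp
    ring
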